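/- Suppose U(ℤ_n), U(ℤ_{φ(n)}), and U(ℤ_{φ(φ(n))}) are all cyclic. Then the set U³(ℤ_n) = {g₁^(g₂^i mod φ(n)) mod n : gcd(i, φ(φ(n))) = 1} has cardinality φ(φ(φ(n))). -/

import Mathlib

/-- If `U(ℤ_n)`, `U(ℤ_{φ n})`, `U(ℤ_{φ φ n})` are all cyclic, then
`U³(ℤ_n) = {g₁ ^ (g₂ ^ i mod φ n) : gcd(i, φ φ n) = 1}` has cardinality `φ(φ(φ n))`. -/
theorem U3_card (n : ℕ) [NeZero n] [NeZero (Nat.totient n)]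
    (g₁ : (ZMod n)ˣ) (g₂ : (ZMod (Nat.totient n))ˣ)
    (hg₁ : ∀ x, x ∈ Subgroup.zpowers g₁)
    (hg₂ : ∀ x, x ∈ Subgroup.zpowers g₂)
    (hcyc : IsCyclic (ZMod (Nat.totient (Nat.totient n)))ˣ) :
    Nat.card {x : (ZMod n)ˣ | ∃ i : ℕ, Nat.gcd i (Nat.totient (Nat.totient n)) = 1 ∧
        x = g₁ ^ ((g₂ ^ i : (ZMod (Nat.totient n))ˣ) : ZMod (Nat.totient n)).val} =
      Nat.totient (Nat.totient (Nat.totient n)) := by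
  classical
  have hcard2 : Fintype.card (ZMod (Nat.totient n))ˣ = Nat.totient (Nat.totient n) :=
    ZMod.card_units_eq_totient _
  have hord1 : orderOf g₁ = Nat.totient n := by
    rw [orderOf_eq_card_of_forall_mem_zpowers hg₁, Nat.card_eq_fintype_card,
      ZMod.card_units_eq_totient]
  have hord2 : orderOf g₂ = Nat.totient (Nat.totient n) := by
    rw [orderOf_eq_card_of_forall_mem_zpowers hg₂, Nat.card_eq_fintype_card, hcard2]
  have hMpos : 0 < Nat.totient (Nat.totient n) :=
    Nat.totient_pos.2 (Nat.pos_of_ne_zero (NeZero.ne _))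
  -- the map u ↦ g₁ ^ u.val is injective
  have hf : Function.Injective
      (fun u : (ZMod (Nat.totient n))ˣ => g₁ ^ ((u : ZMod (Nat.totient n)).val)) := by
    intro a b hab
    have h1 : ((a : ZMod (Nat.totient n)).val) = ((b : ZMod (Nat.totient n)).val) := by
      refine pow_injOn_Iio_orderOf ?_ ?_ hab <;>
        · rw [Set.mem_Iio, hord1]; exact ZMod.val_lt _
    exact Units.ext (ZMod.val_injective _ h1)
  have hset : {x : (ZMod n)ˣ | ∃ i : ℕ, Nat.gcd i (Nat.totient (Nat.totient n)) = 1 ∧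
      x = g₁ ^ ((g₂ ^ i : (ZMod (Nat.totient n))ˣ) : ZMod (Nat.totient n)).val} =
      (fun u : (ZMod (Nat.totient n))ˣ => g₁ ^ ((u : ZMod (Nat.totient n)).val)) ''
        {u : (ZMod (Nat.totient n))ˣ | orderOf u = Nat.totient (Nat.totient n)} := by
    ext x
    simp only [Set.mem_setOf_eq, Set.mem_image]
    constructor
    · rintro ⟨i, hi, rfl⟩
      refine ⟨g₂ ^ i, ?_, rfl⟩
      show orderOf (g₂ ^ i) = _
      rw [orderOf_pow, hord2, Nat.Coprime.gcd_eq_one (Nat.Coprime.symm hi), Nat.div_one]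
    · rintro ⟨u, hu, rfl⟩
      obtain ⟨i, rfl⟩ := mem_powers_iff_mem_zpowers.2 (hg₂ u)
      refine ⟨i, ?_, rfl⟩
      have hu' : orderOf (g₂ ^ i) = Nat.totient (Nat.totient n) := hu
      rw [orderOf_pow, hord2] at hu'
      have hdvd : (Nat.totient (Nat.totient n)).gcd i ∣ Nat.totient (Nat.totient n) :=
        Nat.gcd_dvd_left _ _
      have hg1 : (Nat.totient (Nat.totient n)).gcd i = 1 := by
        rcases (Nat.div_eq_self).1 hu' with h | h
        · omega
        · exact h
      exact Nat.coprime_comm.mp hg1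
  rw [hset, Nat.card_image_of_injective hf _]
  have hcyc2 : IsCyclic (ZMod (Nat.totient n))ˣ := ⟨⟨g₂, hg₂⟩⟩
  have hd : Nat.totient (Nat.totient n) ∣ Fintype.card (ZMod (Nat.totient n))ˣ := by
    rw [hcard2]
  have hkey := IsCyclic.card_orderOf_eq_totient (α := (ZMod (Nat.totient n))ˣ) hd
  rw [Nat.card_eq_fintype_card, Fintype.card_subtype]
  convert hkey using 2
  ext; simp
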